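/- arXiv:1406.3930 — 2 statements merged into one kernel-verified Lean document; each statement's English description precedes it below -/
import Mathlib

section
/- Let m ≥ 2, n ≥ 1 and 0 ≤ u ≤ n be integers with m + u ≤ n, and let ψ be an approximating function. Let Γ ⊂ ℝ^{mn} × ℝ^n be the set of pairs (X,α) such that every m×m minor of the m×(n−u) matrix X̃ formed by the columns x^(u+1),…,x^(n) of X has determinant zero (equivalently, rank X̃ ≤ m−1). Then W_{u,α}(m,n;ψ) ⊆ Γ, the Hausdorff dimension of Γ equals mn + m + u − 1 < (m+1)n, and consequently dim W_{u,α}(m,n;ψ) ≤ mn + m + u − 1. -/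
open MeasureTheory Set Filter
open scoped ENNReal NNReal

noncomputable section

/-- The ambient space `ℝ^{mn} × ℝ^n`, with `X : Fin m → Fin n → ℝ` viewed as an
`m × n` matrix whose `i`-th column is `fun j => X j i`. -/
abbrev Espace (m n : ℕ) := (Fin m → Fin n → ℝ) × (Fin n → ℝ)

/-- The unit cube `I^{mn} × I^n` with `I = [-1/2, 1/2]`. -/
def unitCube (m n : ℕ) : Set (Espace m n) :=
  {p | (∀ i j, |p.1 i j| ≤ 1 / 2) ∧ ∀ i, |p.2 i| ≤ 1 / 2}

/-- Supremum norm of an integer vector, as a natural number. -/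
def qNorm {m : ℕ} (q : Fin m → ℤ) : ℕ := Finset.univ.sup fun i => (q i).natAbs

/-- `ψ` is an approximating function: positive and tending to `0` at infinity. -/
def IsApprox (ψ : ℕ → ℝ) : Prop := (∀ r, 0 < ψ r) ∧ Tendsto ψ atTop (nhds 0)

/-- `f` is a dimension function: continuous, increasing and positive on `(0,∞)`,
tending to `0` at `0⁺`. -/
def IsDimFun (f : ℝ → ℝ) : Prop :=
  ContinuousOn f (Ioi 0) ∧ MonotoneOn f (Ioi 0) ∧ (∀ r, 0 < r → 0 < f r) ∧
    Tendsto f (nhdsWithin 0 (Ioi 0)) (nhds 0)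

/-- `g` is monotonic on `(0,∞)`. -/
def MonoOn (g : ℝ → ℝ) : Prop := MonotoneOn g (Ioi 0) ∨ AntitoneOn g (Ioi 0)

/-- Hausdorff measure with gauge (dimension function) `f`. -/
def hGauge {E : Type*} [EMetricSpace E] [MeasurableSpace E] [BorelSpace E]
    (f : ℝ → ℝ) : Measure E :=
  Measure.mkMetric fun r => ENNReal.ofReal (f r.toReal)

/-- The set `W_{u,α}(m,n;ψ)` of pairs `(X, α)` in the unit cube such that for
infinitely many nonzero `q ∈ ℤ^m` there is `p ∈ ℤ^u` with
`|q·x⁽ⁱ⁾ − αᵢ − pᵢ| < ψ(|q|)` for `1 ≤ i ≤ u` and `|q·x⁽ⁱ⁾ − αᵢ| < ψ(|q|)` for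
`u + 1 ≤ i ≤ n`. -/
def Wmixed (m n u : ℕ) (ψ : ℕ → ℝ) : Set (Espace m n) :=
  {p | p ∈ unitCube m n ∧
    {q : Fin m → ℤ | q ≠ 0 ∧ ∃ v : Fin u → ℤ, ∀ i : Fin n,
      |(∑ j, (q j : ℝ) * p.1 j i) - p.2 i -
        (if h : (i : ℕ) < u then ((v ⟨(i : ℕ), h⟩ : ℤ) : ℝ) else 0)| < ψ (qNorm q)}.Infinite}

/-! ### Auxiliary material -/

theorem contDiff_finset_prod' {X : Type*} [NormedAddCommGroup X] [NormedSpace ℝ X]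
    {ι : Type*} {s : Finset ι} {f : ι → X → ℝ} (h : ∀ i ∈ s, ContDiff ℝ 1 (f i)) :
    ContDiff ℝ 1 fun x => ∏ i ∈ s, f i x := by
  classical
  induction s using Finset.induction with
  | empty => simpa using contDiff_const
  | insert _ _ hx ih =>
    simp only [Finset.prod_insert hx]
    exact (h _ (Finset.mem_insert_self _ _)).mul
      (ih fun i hi => h i (Finset.mem_insert_of_mem hi))

theorem contDiff_det' {X : Type*} [NormedAddCommGroup X] [NormedSpace ℝ X]
    {a : ℕ} {M : X → Matrix (Fin a) (Fin a) ℝ} (h : ∀ i j, ContDiff ℝ 1 fun x => M x i j) :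
    ContDiff ℝ 1 fun x => (M x).det := by
  simp only [Matrix.det_apply, Units.smul_def, zsmul_eq_mul]
  apply ContDiff.sum
  intro σ _
  exact contDiff_const.mul (contDiff_finset_prod' fun i _ => h _ _)

/-- Parameter space. -/
abbrev Pspace (m n u : ℕ) : Type :=
  (Fin m → Fin u → ℝ) × (Fin m → Fin (m - 1) → ℝ) ×
    (Fin (m - 1) → Fin (n - u - (m - 1)) → ℝ) × (Fin n → ℝ)

/-- The `m × (n-u)` matrix of the last `n - u` columns. -/
def tmat {m n : ℕ} (u : ℕ) (p : Espace m n) : Matrix (Fin m) (Fin (n - u)) ℝ :=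
  Matrix.of fun i j => p.1 i ⟨u + (j : ℕ), by have := j.isLt; omega⟩

/-- Extension of the coefficient matrix `Λ` to all columns. -/
def lamFull {m n u : ℕ} (S : Finset (Fin (n - u))) (hS : S.card = m - 1)
    (hc : Sᶜ.card = n - u - (m - 1)) (Λ : Fin (m - 1) → Fin (n - u - (m - 1)) → ℝ) :
    Fin (m - 1) → Fin (n - u) → ℝ :=
  fun t j => if hj : j ∈ S then (if (S.orderIsoOfFin hS).symm ⟨j, hj⟩ = t then 1 else 0)
    else Λ t ((Sᶜ.orderIsoOfFin hc).symm ⟨j, Finset.mem_compl.2 hj⟩)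

/-- The parametrization of the piece of `Γ` associated with the column set `S`. -/
def GS {m n u : ℕ} (hun : u ≤ n) (S : Finset (Fin (n - u))) (hS : S.card = m - 1)
    (hc : Sᶜ.card = n - u - (m - 1)) (θ : Pspace m n u) : Espace m n :=
  (fun i j => if hj : (j : ℕ) < u then θ.1 i ⟨j, hj⟩
    else ∑ t, θ.2.1 i t * lamFull S hS hc θ.2.2.1 t ⟨(j : ℕ) - u, by have := j.isLt; omega⟩,
   θ.2.2.2)

theorem tmat_GS {m n u : ℕ} (hun : u ≤ n) (S : Finset (Fin (n - u))) (hS : S.card = m - 1)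
    (hc : Sᶜ.card = n - u - (m - 1)) (θ : Pspace m n u) :
    tmat u (GS hun S hS hc θ) = Matrix.of θ.2.1 * Matrix.of (lamFull S hS hc θ.2.2.1) := by
  ext i j
  have h1 : ¬ ((u + (j : ℕ)) < u) := by omega
  have h2 : (⟨u + (j : ℕ) - u, by have := j.isLt; omega⟩ : Fin (n - u)) = j := by
    ext; simp
  simp only [tmat, GS, Matrix.mul_apply, Matrix.of_apply, dif_neg h1]
  rw [show (⟨u + (j : ℕ) - u, _⟩ : Fin (n - u)) = j from h2]

theorem GS_rank {m n u : ℕ} (hun : u ≤ n) (S : Finset (Fin (n - u))) (hS : S.card = m - 1)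
    (hc : Sᶜ.card = n - u - (m - 1)) (θ : Pspace m n u) :
    (tmat u (GS hun S hS hc θ)).rank ≤ m - 1 := by
  rw [tmat_GS]
  exact (Matrix.rank_mul_le_left _ _).trans (Matrix.rank_le_width _)

theorem GS_contDiff {m n u : ℕ} (hun : u ≤ n) (S : Finset (Fin (n - u))) (hS : S.card = m - 1)
    (hc : Sᶜ.card = n - u - (m - 1)) : ContDiff ℝ 1 (GS hun S hS hc (m := m)) := by
  apply ContDiff.prodMk
  · apply contDiff_pi.2; intro i; apply contDiff_pi.2; intro j
    by_cases hj : (j : ℕ) < u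
    · simp only [GS, dif_pos hj]
      exact (contDiff_apply_apply ℝ ℝ i (⟨(j : ℕ), hj⟩ : Fin u)).comp contDiff_fst
    · simp only [GS, dif_neg hj]
      apply ContDiff.sum; intro t _
      refine ContDiff.mul ((contDiff_apply_apply ℝ ℝ i t).comp (contDiff_fst.comp contDiff_snd)) ?_
      unfold lamFull
      by_cases hm : (⟨(j : ℕ) - u, by have := j.isLt; omega⟩ : Fin (n - u)) ∈ S
      · simp only [dif_pos hm]; exact contDiff_const
      · simp only [dif_neg hm]
        exact (contDiff_apply_apply ℝ ℝ t _).comp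
          ((contDiff_fst.comp contDiff_snd).comp contDiff_snd)
  · exact (contDiff_snd.comp contDiff_snd).comp contDiff_snd


theorem exists_GS {m n u : ℕ} (hun : u ≤ n) (hlk : m - 1 ≤ n - u) (p : Espace m n)
    (hp : (tmat u p).rank ≤ m - 1) :
    ∃ (S : Finset (Fin (n - u))) (hS : S.card = m - 1) (hc : Sᶜ.card = n - u - (m - 1))
      (θ : Pspace m n u), GS hun S hS hc θ = p := by
  classical
  set A := tmat u p with hA
  set g : Fin (n - u) → (Fin m → ℝ) := fun j i => A i j with hg
  obtain ⟨b, hbsub, hbspan, hbind⟩ := exists_linearIndependent ℝ (Set.range g)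
  have hbfin : b.Finite := (Set.finite_range g).subset hbsub
  set bF : Finset (Fin m → ℝ) := hbfin.toFinset with hbF
  have hbFcoe : (↑bF : Set (Fin m → ℝ)) = b := hbfin.coe_toFinset
  have hbind' : LinearIndependent ℝ ((↑) : (↑bF : Set (Fin m → ℝ)) → (Fin m → ℝ)) := by
    rw [hbFcoe]; exact hbind
  have hcard : bF.card ≤ m - 1 := by
    have h1 : Module.finrank ℝ (Submodule.span ℝ (↑bF : Set (Fin m → ℝ))) = bF.card :=
      finrank_span_finset_eq_card hbind'
    have h2 : (Submodule.span ℝ (↑bF : Set (Fin m → ℝ))) = Submodule.span ℝ (Set.range g) := by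
      rw [hbFcoe, hbspan]
    have h3 : A.rank = Module.finrank ℝ (Submodule.span ℝ (Set.range g)) := by
      rw [Matrix.rank_eq_finrank_span_cols]
      congr 1
    rw [h3, ← h2, h1] at hp
    exact hp
  have hch : ∀ v ∈ b, ∃ j, g j = v := fun v hv => hbsub hv
  choose F hF using hch
  set s₀ : Finset (Fin (n - u)) :=
    bF.attach.image (fun v => F v.1 (hbfin.mem_toFinset.1 v.2)) with hs₀
  have hs₀card : s₀.card ≤ m - 1 :=
    le_trans (Finset.card_image_le.trans (by simp)) hcard
  obtain ⟨S, hs₀S, -, hScard⟩ :=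
    Finset.exists_subsuperset_card_eq (Finset.subset_univ s₀) hs₀card
      (by simpa using hlk)
  have hc : Sᶜ.card = n - u - (m - 1) := by
    simp [Finset.card_compl, hScard]
  set σ := S.orderIsoOfFin hScard with hσ
  set τ := Sᶜ.orderIsoOfFin hc with hτ
  -- every column is in the span of the columns indexed by S
  have hcols : ∀ j, g j ∈ Submodule.span ℝ
      (Set.range fun t : Fin (m - 1) => g ((σ t : Fin (n - u)))) := by
    intro j
    have h1 : b ⊆ ↑(Submodule.span ℝ
        (Set.range fun t : Fin (m - 1) => g ((σ t : Fin (n - u))))) := by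
      intro v hv
      have hj : F v hv ∈ S := hs₀S (by
        refine Finset.mem_image.2 ⟨⟨v, hbfin.mem_toFinset.2 hv⟩, Finset.mem_attach _ _, rfl⟩)
      have : g ((σ (σ.symm ⟨F v hv, hj⟩) : Fin (n - u))) = v := by
        rw [OrderIso.apply_symm_apply]; exact hF v hv
      exact Submodule.subset_span ⟨σ.symm ⟨F v hv, hj⟩, this⟩
    have h2 : Submodule.span ℝ (Set.range g) ≤ Submodule.span ℝ
        (Set.range fun t : Fin (m - 1) => g ((σ t : Fin (n - u)))) := by
      rw [← hbspan]
      exact Submodule.span_le.2 h1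
    exact h2 (Submodule.subset_span ⟨j, rfl⟩)
  have hcoef : ∀ j, ∃ c : Fin (m - 1) → ℝ,
      ∑ t, c t • g ((σ t : Fin (n - u))) = g j :=
    fun j => (Submodule.mem_span_range_iff_exists_fun ℝ).1 (hcols j)
  choose c hc2 using hcoef
  refine ⟨S, hScard, hc,
    ⟨fun i t => p.1 i ⟨(t : ℕ), lt_of_lt_of_le t.isLt hun⟩,
     fun i t => A i ((σ t : Fin (n - u))),
     fun t j' => c ((τ j' : Fin (n - u))) t, p.2⟩, ?_⟩
  refine Prod.ext ?_ rfl
  funext i j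
  show (if hj : (j : ℕ) < u then _ else _) = p.1 i j
  by_cases hj : (j : ℕ) < u
  · simp only [dif_pos hj]
  · simp only [dif_neg hj]
    set j₂ : Fin (n - u) := ⟨(j : ℕ) - u, by have := j.isLt; omega⟩ with hj₂
    have hAj : A i j₂ = p.1 i j := by
      have hval : u + (j₂ : ℕ) = (j : ℕ) := by simp only [hj₂]; omega
      show p.1 i ⟨u + (j₂ : ℕ), by have := j₂.isLt; omega⟩ = p.1 i j
      exact congrArg (p.1 i) (Fin.ext hval)
    rw [← hAj]
    unfold lamFull
    by_cases hmem : j₂ ∈ S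
    · simp only [dif_pos hmem]
      have hsum : ∑ t, A i ((σ t : Fin (n - u))) *
            (if σ.symm ⟨j₂, hmem⟩ = t then (1:ℝ) else 0)
          = A i ((σ (σ.symm ⟨j₂, hmem⟩) : Fin (n - u))) := by
        rw [Finset.sum_eq_single (σ.symm ⟨j₂, hmem⟩)]
        · simp
        · intro t _ ht
          rw [if_neg (Ne.symm ht), mul_zero]
        · simp
      rw [hsum, OrderIso.apply_symm_apply]
    · simp only [dif_neg hmem]
      have hτs : ∀ t : Fin (m - 1),
          c ((τ (τ.symm ⟨j₂, Finset.mem_compl.2 hmem⟩) : Fin (n - u))) t = c j₂ t := by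
        intro t; rw [OrderIso.apply_symm_apply]
      have := congrFun (hc2 j₂) i
      simp only [Finset.sum_apply, Pi.smul_apply, smul_eq_mul] at this
      calc ∑ t, A i ((σ t : Fin (n - u))) *
            c ((τ (τ.symm ⟨j₂, Finset.mem_compl.2 hmem⟩) : Fin (n - u))) t
          = ∑ t, c j₂ t * g ((σ t : Fin (n - u))) i := by
            refine Finset.sum_congr rfl fun t _ => ?_
            rw [hτs t, mul_comm]
        _ = g j₂ i := this
        _ = A i j₂ := rfl


theorem W_rank {m n u : ℕ} (ψ : ℕ → ℝ) (hψ : IsApprox ψ) (p : Espace m n)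
    (hp : p ∈ Wmixed m n u ψ) : (tmat u p).rank ≤ m - 1 := by
  by_contra hrank
  obtain ⟨-, hinf⟩ := hp
  have hm1 : (tmat u p).rank = m := by
    have h := Matrix.rank_le_card_height (tmat u p)
    simp only [Fintype.card_fin] at h
    omega
  set A := tmat u p with hA
  set f := A.transpose.mulVecLin with hf
  have hker : LinearMap.ker f = ⊥ := by
    have hrt : A.transpose.rank = m := by rw [Matrix.rank_transpose]; exact hm1
    rw [Matrix.rank] at hrt
    have h4 := LinearMap.finrank_range_add_finrank_ker f
    have h5 : Module.finrank ℝ (Fin m → ℝ) = m := by simp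
    rw [h5] at h4
    have h6 : Module.finrank ℝ (LinearMap.range f) = m := hrt
    have h7 : Module.finrank ℝ (LinearMap.ker f) = 0 := by omega
    exact Submodule.finrank_eq_zero.1 h7
  obtain ⟨K, hK0, hKanti⟩ := LinearMap.exists_antilipschitzWith f hker
  obtain ⟨C, hC⟩ := hψ.2.bddAbove_range
  have hCb : ∀ r, ψ r ≤ C := fun r => hC ⟨r, rfl⟩
  have hC0 : 0 ≤ C := le_trans (hψ.1 0).le (hCb 0)
  set αt : Fin (n - u) → ℝ := fun j => p.2 ⟨u + (j : ℕ), by have := j.isLt; omega⟩ with hαt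
  set R : ℝ := K * (‖αt‖ + C) with hR
  -- every q in the infinite set has bounded coordinates
  have hbound : ∀ q : Fin m → ℤ, (q ≠ 0 ∧ ∃ v : Fin u → ℤ, ∀ i : Fin n,
      |(∑ j, (q j : ℝ) * p.1 j i) - p.2 i -
        (if h : (i : ℕ) < u then ((v ⟨(i : ℕ), h⟩ : ℤ) : ℝ) else 0)| < ψ (qNorm q)) →
      ∀ i, q i ∈ Set.Icc (-⌈R⌉) ⌈R⌉ := by
    rintro q ⟨hq0, v, hv⟩ i
    set qR : Fin m → ℝ := fun i => (q i : ℝ) with hqR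
    have hfq : ∀ j : Fin (n - u), |(f qR) j - αt j| ≤ C := by
      intro j
      have hlt : ¬ ((u + (j : ℕ)) < u) := by omega
      have h := hv ⟨u + (j : ℕ), by have := j.isLt; omega⟩
      rw [dif_neg hlt] at h
      have heq : (f qR) j = ∑ i, (q i : ℝ) * p.1 i ⟨u + (j : ℕ), by have := j.isLt; omega⟩ := by
        show A.transpose.mulVec qR j = _
        rw [Matrix.mulVec]
        simp only [dotProduct, Matrix.transpose_apply]
        exact Finset.sum_congr rfl fun i _ => mul_comm _ _
      rw [heq]
      have : αt j = p.2 ⟨u + (j : ℕ), by have := j.isLt; omega⟩ := rfl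
      rw [this]
      calc |(∑ i, (q i : ℝ) * p.1 i ⟨u + (j : ℕ), _⟩) - p.2 ⟨u + (j : ℕ), _⟩|
          = |(∑ i, (q i : ℝ) * p.1 i ⟨u + (j : ℕ), _⟩) - p.2 ⟨u + (j : ℕ), _⟩ - 0| := by
            rw [sub_zero]
        _ ≤ C := le_trans (le_of_lt h) (hCb _)
    have hnorm1 : ‖f qR - αt‖ ≤ C := by
      rw [pi_norm_le_iff_of_nonneg hC0]
      intro j
      simpa [Real.norm_eq_abs] using hfq j
    have hnorm2 : ‖f qR‖ ≤ ‖αt‖ + C := by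
      calc ‖f qR‖ = ‖αt + (f qR - αt)‖ := by ring_nf
        _ ≤ ‖αt‖ + ‖f qR - αt‖ := norm_add_le _ _
        _ ≤ ‖αt‖ + C := by linarith
    have hdist := hKanti.le_mul_dist qR 0
    rw [map_zero, dist_zero_right, dist_zero_right] at hdist
    have hqRnorm : ‖qR‖ ≤ R := by
      calc ‖qR‖ ≤ K * ‖f qR‖ := hdist
        _ ≤ K * (‖αt‖ + C) := by
            exact mul_le_mul_of_nonneg_left hnorm2 (by positivity)
    have hcoord : |(q i : ℝ)| ≤ R := by
      have := norm_le_pi_norm qR i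
      rw [Real.norm_eq_abs] at this
      exact le_trans this hqRnorm
    have hcast : (|q i| : ℝ) ≤ (⌈R⌉ : ℝ) := by
      push_cast
      exact le_trans hcoord (Int.le_ceil R)
    have habs : |q i| ≤ ⌈R⌉ := by exact_mod_cast hcast
    rw [Set.mem_Icc]
    constructor <;> [linarith [neg_abs_le (q i)]; linarith [le_abs_self (q i)]]
  have hfin : ({q : Fin m → ℤ | q ≠ 0 ∧ ∃ v : Fin u → ℤ, ∀ i : Fin n,
      |(∑ j, (q j : ℝ) * p.1 j i) - p.2 i -
        (if h : (i : ℕ) < u then ((v ⟨(i : ℕ), h⟩ : ℤ) : ℝ) else 0)| < ψ (qNorm q)}).Finite := by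
    apply Set.Finite.subset (Set.Finite.pi fun _ : Fin m => Set.finite_Icc (-⌈R⌉) ⌈R⌉)
    intro q hq
    exact fun i _ => hbound q hq i
  exact hinf hfin


/-! ### The retraction used for the lower bound -/

def Bof {m n u : ℕ} (S : Finset (Fin (n - u))) (hS : S.card = m - 1) (p : Espace m n) :
    Fin m → Fin (m - 1) → ℝ :=
  fun i t => tmat u p i ((S.orderIsoOfFin hS t : Fin (n - u)))

def Cof {m n u : ℕ} (S : Finset (Fin (n - u))) (hS : S.card = m - 1)
    (hc : Sᶜ.card = n - u - (m - 1)) (p : Espace m n) :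
    Matrix (Fin (m - 1)) (Fin (n - u - (m - 1))) ℝ :=
  Matrix.of fun t j' =>
    tmat u p (Fin.castLE (Nat.sub_le m 1) t) ((Sᶜ.orderIsoOfFin hc j' : Fin (n - u)))

def bP {m n u : ℕ} (S : Finset (Fin (n - u))) (hS : S.card = m - 1) (p : Espace m n) :
    Matrix (Fin (m - 1)) (Fin (m - 1)) ℝ :=
  Matrix.of fun t t' => Bof S hS p (Fin.castLE (Nat.sub_le m 1) t) t'

def bT {m : ℕ} (B : Fin m → Fin (m - 1) → ℝ) : Matrix (Fin (m - 1)) (Fin (m - 1)) ℝ :=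
  Matrix.of fun t t' => B (Fin.castLE (Nat.sub_le m 1) t) t'

def Rmap {m n u : ℕ} (hun : u ≤ n) (S : Finset (Fin (n - u))) (hS : S.card = m - 1)
    (hc : Sᶜ.card = n - u - (m - 1)) (p : Espace m n) : Pspace m n u :=
  (fun i t => p.1 i ⟨(t : ℕ), lt_of_lt_of_le t.isLt hun⟩,
   Bof S hS p,
   fun t j' => ((bP S hS p).det)⁻¹ * (((bP S hS p).adjugate * Cof S hS hc p) t j'),
   p.2)

theorem Bof_GS {m n u : ℕ} (hun : u ≤ n) (S : Finset (Fin (n - u))) (hS : S.card = m - 1)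
    (hc : Sᶜ.card = n - u - (m - 1)) (θ : Pspace m n u) :
    Bof S hS (GS hun S hS hc θ) = θ.2.1 := by
  funext i t
  set σ := S.orderIsoOfFin hS with hσ
  have hmem : ((σ t : Fin (n - u))) ∈ S := (σ t).2
  show tmat u (GS hun S hS hc θ) i ((σ t : Fin (n - u))) = θ.2.1 i t
  rw [tmat_GS]
  show ∑ t', θ.2.1 i t' * lamFull S hS hc θ.2.2.1 t' ((σ t : Fin (n - u))) = θ.2.1 i t
  have hlam : ∀ t' : Fin (m - 1), lamFull S hS hc θ.2.2.1 t' ((σ t : Fin (n - u)))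
      = if t = t' then (1 : ℝ) else 0 := by
    intro t'
    unfold lamFull
    rw [dif_pos hmem]
    have : σ.symm ⟨(σ t : Fin (n - u)), hmem⟩ = t := by
      rw [show (⟨(σ t : Fin (n - u)), hmem⟩ : {x // x ∈ S}) = σ t from Subtype.ext rfl]
      exact σ.symm_apply_apply t
    rw [this]
  simp only [hlam]
  rw [Finset.sum_eq_single t]
  · simp
  · intro t' _ ht'; rw [if_neg (Ne.symm ht'), mul_zero]
  · simp

theorem Cof_GS {m n u : ℕ} (hun : u ≤ n) (S : Finset (Fin (n - u))) (hS : S.card = m - 1)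
    (hc : Sᶜ.card = n - u - (m - 1)) (θ : Pspace m n u) :
    Cof S hS hc (GS hun S hS hc θ) = bT θ.2.1 * Matrix.of θ.2.2.1 := by
  funext t j'
  set τ := Sᶜ.orderIsoOfFin hc with hτ
  have hmem : ((τ j' : Fin (n - u))) ∉ S := by
    have := (τ j').2
    exact Finset.mem_compl.1 this
  show tmat u (GS hun S hS hc θ) (Fin.castLE (Nat.sub_le m 1) t) ((τ j' : Fin (n - u)))
      = (bT θ.2.1 * Matrix.of θ.2.2.1) t j'
  rw [tmat_GS]
  show ∑ t', θ.2.1 (Fin.castLE (Nat.sub_le m 1) t) t' *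
      lamFull S hS hc θ.2.2.1 t' ((τ j' : Fin (n - u))) = _
  have hlam : ∀ t' : Fin (m - 1), lamFull S hS hc θ.2.2.1 t' ((τ j' : Fin (n - u)))
      = θ.2.2.1 t' j' := by
    intro t'
    unfold lamFull
    rw [dif_neg hmem]
    rw [show (⟨(τ j' : Fin (n - u)), Finset.mem_compl.2 hmem⟩ : {x // x ∈ Sᶜ}) = τ j'
      from Subtype.ext rfl, τ.symm_apply_apply]
  simp only [hlam]
  rw [Matrix.mul_apply]
  rfl

theorem Rmap_GS {m n u : ℕ} (hun : u ≤ n) (S : Finset (Fin (n - u))) (hS : S.card = m - 1)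
    (hc : Sᶜ.card = n - u - (m - 1)) (θ : Pspace m n u) (hdet : (bT θ.2.1).det ≠ 0) :
    Rmap hun S hS hc (GS hun S hS hc θ) = θ := by
  have hbp : bP S hS (GS hun S hS hc θ) = bT θ.2.1 := by
    unfold bP bT
    rw [Bof_GS hun S hS hc θ]
  refine Prod.ext ?_ (Prod.ext ?_ (Prod.ext ?_ rfl))
  · funext i t
    show (GS hun S hS hc θ).1 i ⟨(t : ℕ), lt_of_lt_of_le t.isLt hun⟩ = θ.1 i t
    have hj : ((⟨(t : ℕ), lt_of_lt_of_le t.isLt hun⟩ : Fin n) : ℕ) < u := t.isLt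
    simp only [GS, dif_pos hj]
  · exact Bof_GS hun S hS hc θ
  · funext t j'
    show ((bP S hS (GS hun S hS hc θ)).det)⁻¹ *
        (((bP S hS (GS hun S hS hc θ)).adjugate * Cof S hS hc (GS hun S hS hc θ)) t j')
        = θ.2.2.1 t j'
    rw [hbp, Cof_GS hun S hS hc θ, ← Matrix.mul_assoc, Matrix.adjugate_mul,
      Matrix.smul_mul, Matrix.one_mul]
    rw [Matrix.smul_apply, smul_eq_mul, ← mul_assoc, inv_mul_cancel₀ hdet, one_mul]
    rfl

theorem Rmap_contDiffAt {m n u : ℕ} (hun : u ≤ n) (S : Finset (Fin (n - u)))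
    (hS : S.card = m - 1) (hc : Sᶜ.card = n - u - (m - 1)) (p₀ : Espace m n)
    (hdet : (bP S hS p₀).det ≠ 0) :
    ContDiffAt ℝ 1 (Rmap hun S hS hc) p₀ := by
  have hB : ∀ (i : Fin m) (t : Fin (m - 1)),
      ContDiff ℝ 1 fun p : Espace m n => Bof S hS p i t := by
    intro i t
    simp only [Bof, tmat, Matrix.of_apply]
    exact (contDiff_apply_apply ℝ ℝ i _).comp contDiff_fst
  have hdetc : ContDiff ℝ 1 fun p : Espace m n => (bP S hS p).det := by
    apply contDiff_det'
    intro t t'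
    simp only [bP, Matrix.of_apply]
    exact hB _ _
  have hadj : ∀ (t s : Fin (m - 1)),
      ContDiff ℝ 1 fun p : Espace m n => (bP S hS p).adjugate t s := by
    intro t s
    simp only [Matrix.adjugate_apply]
    apply contDiff_det'
    intro a b
    by_cases ha : a = s
    · simp only [Matrix.updateRow_apply, if_pos ha]
      exact contDiff_const
    · simp only [Matrix.updateRow_apply, if_neg ha]
      simp only [bP, Matrix.of_apply]
      exact hB _ _
  have hCc : ∀ (s : Fin (m - 1)) (j' : Fin (n - u - (m - 1))),
      ContDiff ℝ 1 fun p : Espace m n => Cof S hS hc p s j' := by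
    intro s j'
    simp only [Cof, tmat, Matrix.of_apply]
    exact (contDiff_apply_apply ℝ ℝ _ _).comp contDiff_fst
  refine ContDiffAt.prodMk ?_ (ContDiffAt.prodMk ?_ (ContDiffAt.prodMk ?_ ?_))
  · apply contDiffAt_pi.2; intro i; apply contDiffAt_pi.2; intro t
    exact ((contDiff_apply_apply ℝ ℝ i _).comp contDiff_fst).contDiffAt
  · apply contDiffAt_pi.2; intro i; apply contDiffAt_pi.2; intro t
    exact (hB i t).contDiffAt
  · apply contDiffAt_pi.2; intro t; apply contDiffAt_pi.2; intro j'
    simp only [Matrix.mul_apply]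
    exact ContDiffAt.mul (hdetc.contDiffAt.inv hdet)
      ((ContDiff.sum fun s _ => (hadj t s).mul (hCc s j')).contDiffAt)
  · exact (contDiff_snd).contDiffAt


/-- Lemma 1.5: for `m + u ≤ n` and an approximating function
`ψ`, with `Γ` the set of pairs `(X, α)` such that the `m × (n-u)` matrix `X̃`
of the last `n - u` columns of `X` has rank at most `m - 1` (equivalently every
`m × m` minor vanishes), one has `W_{u,α}(m,n;ψ) ⊆ Γ`,
`dim Γ = mn + m + u − 1 < (m+1)n`, and hence
`dim W_{u,α}(m,n;ψ) ≤ mn + m + u − 1`. -/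
theorem stmt6 (m n u : ℕ) (hm : 2 ≤ m) (hn : 1 ≤ n) (hun : u ≤ n) (hmu : m + u ≤ n)
    (ψ : ℕ → ℝ) (hψ : IsApprox ψ)
    (Γ : Set (Espace m n))
    (hΓ : Γ = {p : Espace m n |
      Matrix.rank (Matrix.of fun (i : Fin m) (j : Fin (n - u)) =>
        p.1 i ⟨u + (j : ℕ), by have := j.isLt; omega⟩) ≤ m - 1}) :
    Wmixed m n u ψ ⊆ Γ ∧
    dimH Γ = ((m * n + m + u - 1 : ℕ) : ℝ≥0∞) ∧
    (m * n + m + u - 1 : ℕ) < (m + 1) * n ∧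
    dimH (Wmixed m n u ψ) ≤ ((m * n + m + u - 1 : ℕ) : ℝ≥0∞) := by
  classical
  have hlk : m - 1 ≤ n - u := by omega
  have hΓ' : Γ = {p : Espace m n | (tmat u p).rank ≤ m - 1} := hΓ
  have part1 : Wmixed m n u ψ ⊆ Γ := by
    rw [hΓ']; intro p hp; exact W_rank ψ hψ p hp
  have hfinP : Module.finrank ℝ (Pspace m n u) = m * n + m + u - 1 := by
    have h1 : (1:ℕ) ≤ m := by omega
    have h3 : 1 ≤ m * n + m + u :=
      le_trans (show (1:ℕ) ≤ m by omega)
        (le_trans (Nat.le_add_left m (m * n)) (Nat.le_add_right _ u))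
    have harith : m * u + (m * (m - 1) + ((m - 1) * (n - u - (m - 1)) + n))
        = m * n + m + u - 1 := by
      zify [h1, hlk, hun, h3]
      ring
    rw [← harith]
    simp only [Pspace, Module.finrank_prod, Module.finrank_pi_fintype,
      Module.finrank_fintype_fun_eq_card, Fintype.card_fin, Finset.sum_const, smul_eq_mul,
      Finset.card_fin, Module.finrank_self, mul_one]
  have hcfun : ∀ (S : Finset (Fin (n - u))), S.card = m - 1 → Sᶜ.card = n - u - (m - 1) := by
    intro S hS
    simp [Finset.card_compl, hS]
  -- upper bound
  have hcover : Γ ⊆ ⋃ (S : Finset (Fin (n - u))), ⋃ (hS : S.card = m - 1),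
      Set.range (GS hun S hS (hcfun S hS)) := by
    rw [hΓ']
    intro p hp
    obtain ⟨S, hS, hc, θ, hθ⟩ := exists_GS hun hlk p hp
    exact Set.mem_iUnion.2 ⟨S, Set.mem_iUnion.2 ⟨hS, ⟨θ, hθ⟩⟩⟩
  have hupper : dimH Γ ≤ ((m * n + m + u - 1 : ℕ) : ℝ≥0∞) := by
    refine le_trans (dimH_mono hcover) ?_
    rw [dimH_iUnion]
    refine iSup_le fun S => ?_
    rw [dimH_iUnion]
    refine iSup_le fun hS => ?_
    refine le_trans (dimH_range_le_of_locally_lipschitzOn fun x =>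
      ((GS_contDiff hun S hS (hcfun S hS)).contDiffAt (x := x)).exists_lipschitzOnWith) ?_
    rw [Real.dimH_univ_eq_finrank (Pspace m n u), hfinP]
  -- lower bound
  set S₀ : Finset (Fin (n - u)) := Finset.image (Fin.castLE hlk) Finset.univ with hS₀def
  have hS₀ : S₀.card = m - 1 := by
    rw [hS₀def, Finset.card_image_of_injective _ (Fin.castLE_injective hlk),
      Finset.card_univ, Fintype.card_fin]
  have hc₀ : S₀ᶜ.card = n - u - (m - 1) := hcfun S₀ hS₀
  set B₀ : Fin m → Fin (m - 1) → ℝ := fun i t => if (i : ℕ) = (t : ℕ) then 1 else 0 with hB₀def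
  set θ₀ : Pspace m n u := (0, B₀, 0, 0) with hθ₀def
  have hbT : bT B₀ = 1 := by
    funext a b
    simp only [bT, Matrix.of_apply, hB₀def, Matrix.one_apply]
    have hv : ((Fin.castLE (Nat.sub_le m 1) a : Fin m) : ℕ) = (a : ℕ) := rfl
    rw [hv]
    by_cases h : a = b
    · rw [if_pos (by rw [h]), if_pos h]
    · rw [if_neg (fun hh => h (Fin.ext hh)), if_neg h]
  have hdet0 : (bT (θ₀.2.1)).det ≠ 0 := by
    show (bT B₀).det ≠ 0
    rw [hbT, Matrix.det_one]
    exact one_ne_zero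
  set p₀ := GS hun S₀ hS₀ hc₀ θ₀ with hp₀def
  have hdetP : (bP S₀ hS₀ p₀).det ≠ 0 := by
    have hbp : bP S₀ hS₀ p₀ = bT θ₀.2.1 := by
      unfold bP bT
      rw [hp₀def, Bof_GS]
    rw [hbp]
    exact hdet0
  obtain ⟨K, t, ht, hlip⟩ := (Rmap_contDiffAt hun S₀ hS₀ hc₀ p₀ hdetP).exists_lipschitzOnWith
  have hcd1 : ContDiff ℝ 1 fun θ : Pspace m n u => (bT θ.2.1).det := by
    apply contDiff_det'
    intro a b
    simp only [bT, Matrix.of_apply]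
    exact (contDiff_apply_apply ℝ ℝ _ _).comp (contDiff_fst.comp contDiff_snd)
  have hdetc : Continuous fun θ : Pspace m n u => (bT θ.2.1).det := hcd1.continuous
  set V : Set (Pspace m n u) :=
    (GS hun S₀ hS₀ hc₀) ⁻¹' (interior t) ∩ {θ | (bT θ.2.1).det ≠ 0} with hVdef
  have hVopen : IsOpen V := by
    apply IsOpen.inter
    · exact isOpen_interior.preimage (GS_contDiff hun S₀ hS₀ hc₀).continuous
    · exact isOpen_ne.preimage hdetc
  have hθ₀V : θ₀ ∈ V := ⟨mem_interior_iff_mem_nhds.2 ht, hdet0⟩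
  have hVnhds : V ∈ nhds θ₀ := hVopen.mem_nhds hθ₀V
  have hVdim : dimH V = ((m * n + m + u - 1 : ℕ) : ℝ≥0∞) := by
    rw [Real.dimH_of_mem_nhds hVnhds, hfinP]
  have himg : (GS hun S₀ hS₀ hc₀) '' V ⊆ Γ := by
    rw [hΓ']
    rintro _ ⟨θ, hθ, rfl⟩
    exact GS_rank hun S₀ hS₀ hc₀ θ
  have himgt : (GS hun S₀ hS₀ hc₀) '' V ⊆ t := by
    rintro _ ⟨θ, hθ, rfl⟩
    exact interior_subset hθ.1
  have hRV : Rmap hun S₀ hS₀ hc₀ '' ((GS hun S₀ hS₀ hc₀) '' V) = V := by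
    rw [Set.image_image]
    have hcg : ∀ θ ∈ V, Rmap hun S₀ hS₀ hc₀ (GS hun S₀ hS₀ hc₀ θ) = θ :=
      fun θ hθ => Rmap_GS hun S₀ hS₀ hc₀ θ hθ.2
    rw [Set.image_congr hcg, Set.image_id']
  have hlower : ((m * n + m + u - 1 : ℕ) : ℝ≥0∞) ≤ dimH Γ := by
    calc ((m * n + m + u - 1 : ℕ) : ℝ≥0∞) = dimH V := hVdim.symm
      _ = dimH (Rmap hun S₀ hS₀ hc₀ '' ((GS hun S₀ hS₀ hc₀) '' V)) := by rw [hRV]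
      _ ≤ dimH ((GS hun S₀ hS₀ hc₀) '' V) := (hlip.mono himgt).dimH_image_le
      _ ≤ dimH Γ := dimH_mono himg
  have hdim : dimH Γ = ((m * n + m + u - 1 : ℕ) : ℝ≥0∞) := le_antisymm hupper hlower
  have harith : (m * n + m + u - 1 : ℕ) < (m + 1) * n := by
    have h1 : (m + 1) * n = m * n + n := by ring
    rw [h1]
    have h2 : ∀ a : ℕ, a + m + u - 1 < a + n := fun a => by omega
    exact h2 (m * n)
  exact ⟨part1, hdim, harith, le_trans (dimH_mono part1) (le_of_eq hdim)⟩
end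
end

section
/- Let m ≥ 1, n ≥ 1 be integers, let ψ be an approximating function (no monotonicity assumed), and let f and r ↦ r^{-mn} f(r) be dimension functions such that r ↦ r^{-(m+1)n} f(r) is monotonic. If Σ_{r=1}^∞ f(Ψ(r)) Ψ(r)^{-mn} r^{m+n-1} < ∞, then H^f(W_α(m,n;ψ)) = 0. -/
open MeasureTheory Set Filter
open scoped ENNReal NNReal

set_option maxHeartbeats 1000000

noncomputable section

/-- The inhomogeneous set `W_α(m,n;ψ)` of pairs `(X, α)` in the unit cube such
that for infinitely many nonzero `q ∈ ℤ^m` there is `p ∈ ℤ^n` with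
`|q·x⁽ⁱ⁾ − αᵢ − pᵢ| ≤ ψ(|q|)` for all `1 ≤ i ≤ n`, i.e. each coordinate of
`qX − α` lies within `ψ(|q|)` of an integer. -/
def Wclassical (m n : ℕ) (ψ : ℕ → ℝ) : Set (Espace m n) :=
  {p | p ∈ unitCube m n ∧
    {q : Fin m → ℤ | q ≠ 0 ∧ ∃ v : Fin n → ℤ, ∀ i : Fin n,
      |(∑ j, (q j : ℝ) * p.1 j i) - p.2 i - (v i : ℝ)| ≤ ψ (qNorm q)}.Infinite}

namespace Stmt13Aux

variable (m n : ℕ) (ψ : ℕ → ℝ)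

/-- The mesh size `Ψ(r) = ψ(r)/r`. -/
def Psi (r : ℕ) : ℝ := ψ r / r

/-- Half-side count for the `X`-grid. -/
def sA (r : ℕ) : ℤ := ⌈1 / (2 * Psi ψ r)⌉ + 1

/-- Half-side count for the `u`-grid. -/
def sU (r : ℕ) : ℤ := ((m : ℤ) + 2) * r

def Fa (R : ℕ) (q : Fin m → ℤ) : Finset (Fin m → Fin n → ℤ) :=
  if q ≠ 0 ∧ R ≤ qNorm q then
    Fintype.piFinset fun _ => Fintype.piFinset fun _ =>
      Finset.Icc (-(sA ψ (qNorm q))) (sA ψ (qNorm q))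
  else ∅

def Fd : Finset (Fin n → ℤ) :=
  Fintype.piFinset fun _ => Finset.Icc (-((m : ℤ) + 2)) ((m : ℤ) + 2)

def Fu (q : Fin m → ℤ) : Finset (Fin n → ℤ) :=
  Fintype.piFinset fun _ => Finset.Icc (-(sU m (qNorm q))) (sU m (qNorm q))

def sFun (q : Fin m → ℤ) (a : Fin m → Fin n → ℤ) (i : Fin n) : ℝ :=
  ∑ j, (q j : ℝ) * ((a j i : ℝ) * Psi ψ (qNorm q))

def Tset (q : Fin m → ℤ) (a : Fin m → Fin n → ℤ) (d u : Fin n → ℤ) : Set (Espace m n) :=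
  {p | (∀ j i, p.1 j i ∈
      Icc ((a j i : ℝ) * Psi ψ (qNorm q)) (((a j i : ℝ) + 1) * Psi ψ (qNorm q))) ∧
    ∀ i, p.2 i ∈ Icc
      (sFun m n ψ q a i - ((⌊sFun m n ψ q a i⌋ : ℝ) + (d i : ℝ))
        + (u i : ℝ) * Psi ψ (qNorm q))
      (sFun m n ψ q a i - ((⌊sFun m n ψ q a i⌋ : ℝ) + (d i : ℝ))
        + ((u i : ℝ) + 1) * Psi ψ (qNorm q))}

def Idx (R : ℕ) : Type :=
  Σ q : Fin m → ℤ, (↥(Fa m n ψ R q) × ↥(Fd m n) × ↥(Fu m n q))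

instance (R : ℕ) : Countable (Idx m n ψ R) := by unfold Idx; infer_instance

def tfun (R : ℕ) (i : Idx m n ψ R) : Set (Espace m n) :=
  Tset m n ψ i.1 i.2.1 i.2.2.1 i.2.2.2.1

lemma natAbs_le_qNorm (q : Fin m → ℤ) (j : Fin m) : (q j).natAbs ≤ qNorm q :=
  Finset.le_sup (f := fun i => (q i).natAbs) (Finset.mem_univ j)

lemma finite_qNorm_lt (N : ℕ) : {q : Fin m → ℤ | qNorm q < N}.Finite := by
  refine (Set.Finite.pi (fun _ : Fin m => Set.finite_Icc (-(N : ℤ)) N)).subset ?_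
  intro q hq
  rw [Set.mem_pi]
  intro j _
  have h := natAbs_le_qNorm m q j
  have : (q j).natAbs < N := lt_of_le_of_lt h hq
  simp only [Set.mem_Icc]
  omega


lemma Psi_pos (hψ : ∀ r, 0 < ψ r) {r : ℕ} (hr : 1 ≤ r) : 0 < Psi ψ r :=
  div_pos (hψ r) (by exact_mod_cast hr)

lemma Psi_le_psi (hψ : ∀ r, 0 < ψ r) {r : ℕ} (hr : 1 ≤ r) : Psi ψ r ≤ ψ r :=
  div_le_self (hψ r).le (by exact_mod_cast hr)

lemma abs_cast_q_le (q : Fin m → ℤ) (j : Fin m) : |(q j : ℝ)| ≤ (qNorm q : ℝ) := by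
  have h := natAbs_le_qNorm m q j
  rw [← Int.cast_abs, Int.abs_eq_natAbs]
  exact_mod_cast h

lemma cover (hm : 1 ≤ m) (hψ : ∀ r, 0 < ψ r) (R : ℕ) (hR : 1 ≤ R)
    (hψ1 : ∀ k, R ≤ k → ψ k ≤ 1) :
    Wclassical m n ψ ⊆ ⋃ i : Idx m n ψ R, tfun m n ψ R i := by
  rintro p ⟨hcube, hinf⟩
  have hnsub : ¬ ({q : Fin m → ℤ | q ≠ 0 ∧ ∃ v : Fin n → ℤ, ∀ i : Fin n,
      |(∑ j, (q j : ℝ) * p.1 j i) - p.2 i - (v i : ℝ)| ≤ ψ (qNorm q)} ⊆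
      {q | qNorm q < R}) := fun hsub => hinf ((finite_qNorm_lt m R).subset hsub)
  obtain ⟨q, hq, hqR⟩ := Set.not_subset.mp hnsub
  obtain ⟨hq0, v, hv⟩ := hq
  simp only [Set.mem_setOf_eq, not_lt] at hqR
  set r : ℕ := qNorm q with hrdef
  have hr1 : 1 ≤ r := le_trans hR hqR
  have hrR : (0:ℝ) < r := by exact_mod_cast hr1
  have hrR1 : (1:ℝ) ≤ r := by exact_mod_cast hr1
  set Ψ : ℝ := Psi ψ r with hΨdef
  have hΨ0 : 0 < Ψ := Psi_pos ψ hψ hr1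
  have hψr1 : ψ r ≤ 1 := hψ1 r hqR
  have hrΨ : (r:ℝ) * Ψ = ψ r := by
    rw [hΨdef]; unfold Psi; field_simp
  set a : Fin m → Fin n → ℤ := fun j i => ⌊p.1 j i / Ψ⌋ with hadef
  have hX : ∀ j i, (a j i : ℝ) * Ψ ≤ p.1 j i ∧ p.1 j i ≤ ((a j i : ℝ) + 1) * Ψ := by
    intro j i
    constructor
    · rw [← le_div_iff₀ hΨ0]; exact Int.floor_le _
    · rw [← div_le_iff₀ hΨ0]; exact (Int.lt_floor_add_one _).le
  set s : Fin n → ℝ := sFun m n ψ q a with hsdef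
  have hs : ∀ i, |(∑ j, (q j : ℝ) * p.1 j i) - s i| ≤ m * ψ r := by
    intro i
    have heq : (∑ j, (q j : ℝ) * p.1 j i) - s i
        = ∑ j, (q j : ℝ) * (p.1 j i - (a j i : ℝ) * Ψ) := by
      rw [hsdef]; unfold sFun
      rw [← Finset.sum_sub_distrib]
      exact Finset.sum_congr rfl fun j _ => by rw [← hΨdef]; ring
    rw [heq]
    calc |∑ j, (q j : ℝ) * (p.1 j i - (a j i : ℝ) * Ψ)|
        ≤ ∑ j, |(q j : ℝ) * (p.1 j i - (a j i : ℝ) * Ψ)| := Finset.abs_sum_le_sum_abs _ _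
      _ ≤ ∑ _j : Fin m, (r : ℝ) * Ψ := by
          apply Finset.sum_le_sum
          intro j _
          rw [abs_mul]
          have h1 : |(q j : ℝ)| ≤ (r : ℝ) := abs_cast_q_le m q j
          have h2 : |p.1 j i - (a j i : ℝ) * Ψ| ≤ Ψ := by
            have h3 := hX j i
            rw [abs_le]
            constructor <;> nlinarith [h3.1, h3.2]
          exact mul_le_mul h1 h2 (abs_nonneg _) hrR.le
      _ = m * ψ r := by rw [Finset.sum_const, Finset.card_univ, Fintype.card_fin,
            nsmul_eq_mul, hrΨ]
  have hs2 : ∀ i, |s i - p.2 i - (v i : ℝ)| ≤ (m + 1) * ψ r := by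
    intro i
    have h1 := hv i
    have h2 := hs i
    have heq : s i - p.2 i - (v i : ℝ) =
        ((∑ j, (q j : ℝ) * p.1 j i) - p.2 i - (v i : ℝ))
          - ((∑ j, (q j : ℝ) * p.1 j i) - s i) := by ring
    rw [heq]
    calc |_| ≤ |(∑ j, (q j : ℝ) * p.1 j i) - p.2 i - (v i : ℝ)|
          + |(∑ j, (q j : ℝ) * p.1 j i) - s i| := abs_sub _ _
      _ ≤ ψ r + m * ψ r := add_le_add h1 h2
      _ = (m + 1) * ψ r := by ring
  set d : Fin n → ℤ := fun i => v i - ⌊s i⌋ with hddef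
  set u : Fin n → ℤ := fun i => ⌊(p.2 i - (s i - (v i : ℝ))) / Ψ⌋ with hudef
  have hamem : a ∈ Fa m n ψ R q := by
    rw [Fa, if_pos ⟨hq0, hqR⟩]
    rw [Fintype.mem_piFinset]
    intro j
    rw [Fintype.mem_piFinset]
    intro i
    rw [Finset.mem_Icc, ← hrdef]
    have hub : (1:ℝ)/(2*Ψ) ≤ ((sA ψ r : ℤ) : ℝ) := by
      have h := Int.le_ceil (1/(2*Psi ψ r))
      rw [sA]; push_cast
      rw [← hΨdef] at h ⊢
      linarith
    have hxb := abs_le.mp (hcube.1 j i)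
    have hx1 : p.1 j i / Ψ ≤ 1/(2*Ψ) := by
      rw [← div_div]
      gcongr
      exact hxb.2
    have hx2 : -(1/(2*Ψ)) ≤ p.1 j i / Ψ := by
      rw [← div_div, ← neg_div]
      gcongr
      linarith [hxb.1]
    constructor
    · have h1 : (-(sA ψ r : ℤ) : ℝ) < (a j i : ℝ) + 1 := by
        have h2 : p.1 j i / Ψ < (a j i : ℝ) + 1 := Int.lt_floor_add_one _
        push_cast
        have h3 : ((⌈1/(2*Ψ)⌉ : ℤ) : ℝ) ≥ 1/(2*Ψ) := Int.le_ceil _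
        rw [sA, ← hΨdef]; push_cast
        linarith
      have h4 : -(sA ψ r) < a j i + 1 := by exact_mod_cast h1
      omega
    · have h1 : (a j i : ℝ) ≤ (sA ψ r : ℝ) := by
        calc (a j i : ℝ) ≤ p.1 j i / Ψ := Int.floor_le _
          _ ≤ 1/(2*Ψ) := hx1
          _ ≤ (sA ψ r : ℝ) := hub
      exact_mod_cast h1
  have hdmem : d ∈ Fd m n := by
    rw [Fd, Fintype.mem_piFinset]
    intro i
    rw [Finset.mem_Icc]
    have h1 : |(v i : ℝ) - s i| ≤ (m+1) * ψ r + 1/2 := by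
      have h2 := hs2 i
      have h3 := abs_le.mp (hcube.2 i)
      rw [abs_le] at h2 ⊢
      constructor <;> [nlinarith [h2.1, h2.2, h3.1, h3.2]; nlinarith [h2.1, h2.2, h3.1, h3.2]]
    have h4 : (0:ℝ) ≤ s i - ⌊s i⌋ := by linarith [Int.floor_le (s i)]
    have h5 : s i - ⌊s i⌋ < 1 := by linarith [Int.lt_floor_add_one (s i)]
    have h6 : |(d i : ℝ)| < (m:ℝ) + 3 := by
      have : (d i : ℝ) = ((v i : ℝ) - s i) + (s i - ⌊s i⌋) := by
        rw [hddef]; push_cast; ring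
      rw [this, abs_lt]
      have hb := abs_le.mp h1
      have hψr0 := (hψ r).le
      constructor <;> nlinarith [hb.1, hb.2]
    have h7 : |(d i : ℤ)| < (m:ℤ) + 3 := by exact_mod_cast (by push_cast; exact h6 : |((d i : ℤ):ℝ)| < ((m:ℤ):ℝ) + 3)
    have h8 := abs_lt.mp h7
    omega
  have humem : u ∈ Fu m n q := by
    rw [Fu, Fintype.mem_piFinset]
    intro i
    rw [Finset.mem_Icc, sU, ← hrdef]
    have hw : |p.2 i - (s i - (v i : ℝ))| ≤ (m+1) * ψ r := by
      rw [← abs_neg]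
      have : -(p.2 i - (s i - (v i : ℝ))) = s i - p.2 i - (v i : ℝ) := by ring
      rw [this]; exact hs2 i
    have hwb := abs_le.mp hw
    have hq1 : (m+1) * ψ r / Ψ = (m+1) * r := by
      rw [← hrΨ]; field_simp
    have hub : (u i : ℝ) ≤ ((m:ℝ)+1) * r := by
      calc (u i : ℝ) ≤ (p.2 i - (s i - (v i : ℝ))) / Ψ := Int.floor_le _
        _ ≤ (m+1) * ψ r / Ψ := by gcongr; exact hwb.2
        _ = ((m:ℝ)+1) * r := hq1
    have hlb : -(((m:ℝ)+1) * r) - 1 < (u i : ℝ) := by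
      have h2 : (p.2 i - (s i - (v i : ℝ))) / Ψ < (u i : ℝ) + 1 := Int.lt_floor_add_one _
      have h3 : -((m+1) * ψ r) / Ψ ≤ (p.2 i - (s i - (v i : ℝ))) / Ψ := by
        rw [div_le_div_iff₀ hΨ0 hΨ0]
        nlinarith [hwb.1, hΨ0.le]
      rw [neg_div, hq1] at h3
      linarith
    have hub' : u i ≤ ((m:ℤ)+1) * r := by exact_mod_cast (by push_cast; exact hub : (u i : ℝ) ≤ (((m:ℤ)+1) * (r:ℤ) : ℤ))
    have hlb' : -(((m:ℤ)+1) * r) - 1 < u i := by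
      exact_mod_cast (by push_cast; exact hlb : ((-(((m:ℤ)+1) * (r:ℤ)) - 1 : ℤ) : ℝ) < (u i : ℝ))
    have hr1' : 1 ≤ (r:ℤ) := by exact_mod_cast hr1
    constructor <;> nlinarith [hub', hlb', hr1']
  have hpT : p ∈ Tset m n ψ q a d u := by
    constructor
    · intro j i
      exact ⟨(hX j i).1, by rw [← hΨdef]; exact (hX j i).2⟩
    · intro i
      have hvd : ((⌊sFun m n ψ q a i⌋ : ℝ) + (d i : ℝ)) = (v i : ℝ) := by
        rw [hddef]; push_cast; rw [← hsdef]; ring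
      rw [hvd]
      have h1 : (u i : ℝ) * Ψ ≤ p.2 i - (s i - (v i : ℝ)) := by
        rw [← le_div_iff₀ hΨ0]; exact Int.floor_le _
      have h2 : p.2 i - (s i - (v i : ℝ)) ≤ ((u i : ℝ) + 1) * Ψ := by
        rw [← div_le_iff₀ hΨ0]; exact (Int.lt_floor_add_one _).le
      rw [← hsdef, ← hΨdef]
      constructor <;> [linarith; linarith]
  exact Set.mem_iUnion.mpr ⟨⟨q, ⟨⟨a, hamem⟩, ⟨d, hdmem⟩, ⟨u, humem⟩⟩⟩, hpT⟩


lemma diam_Tset (hn : 1 ≤ n) (hψ : ∀ r, 0 < ψ r) (q : Fin m → ℤ) (hq : 1 ≤ qNorm q)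
    (a : Fin m → Fin n → ℤ) (d u : Fin n → ℤ) :
    EMetric.diam (Tset m n ψ q a d u) = ENNReal.ofReal (Psi ψ (qNorm q)) := by
  set Ψ := Psi ψ (qNorm q) with hΨdef
  have hΨ0 : 0 < Ψ := Psi_pos ψ hψ hq
  set lo : Fin n → ℝ := fun i =>
    sFun m n ψ q a i - ((⌊sFun m n ψ q a i⌋ : ℝ) + (d i : ℝ)) + (u i : ℝ) * Ψ with hlodef
  have hTeq : Tset m n ψ q a d u =
      {p : Espace m n | (∀ j i, p.1 j i ∈
        Icc ((a j i : ℝ) * Ψ) (((a j i : ℝ) + 1) * Ψ)) ∧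
        ∀ i, p.2 i ∈ Icc (lo i) (lo i + Ψ)} := by
    unfold Tset
    ext p
    simp only [Set.mem_setOf_eq, hlodef]
    constructor
    · rintro ⟨h1, h2⟩
      refine ⟨h1, fun i => ?_⟩
      have := h2 i
      simp only [Set.mem_Icc] at this ⊢
      constructor <;> nlinarith [this.1, this.2]
    · rintro ⟨h1, h2⟩
      refine ⟨h1, fun i => ?_⟩
      have := h2 i
      simp only [Set.mem_Icc] at this ⊢
      constructor <;> nlinarith [this.1, this.2]
  rw [hTeq]
  apply le_antisymm
  · apply EMetric.diam_le
    rintro p ⟨hp1, hp2⟩ p' ⟨hp1', hp2'⟩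
    rw [Prod.edist_eq, max_le_iff]
    constructor
    · rw [edist_pi_le_iff]
      intro j
      rw [edist_pi_le_iff]
      intro i
      rw [edist_dist, Real.dist_eq]
      apply ENNReal.ofReal_le_ofReal
      have h1 := hp1 j i; have h2 := hp1' j i
      simp only [Set.mem_Icc] at h1 h2
      rw [abs_le]; constructor <;> nlinarith [h1.1, h1.2, h2.1, h2.2]
    · rw [edist_pi_le_iff]
      intro i
      rw [edist_dist, Real.dist_eq]
      apply ENNReal.ofReal_le_ofReal
      have h1 := hp2 i; have h2 := hp2' i
      simp only [Set.mem_Icc] at h1 h2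
      rw [abs_le]; constructor <;> nlinarith [h1.1, h1.2, h2.1, h2.2]
  · set i0 : Fin n := ⟨0, hn⟩
    set P : Espace m n := (fun j i => (a j i : ℝ) * Ψ, lo)
    set P' : Espace m n := (P.1, Function.update lo i0 (lo i0 + Ψ))
    have hXmem : ∀ (j : Fin m) (i : Fin n),
        P.1 j i ∈ Icc ((a j i : ℝ) * Ψ) (((a j i : ℝ) + 1) * Ψ) := by
      intro j i
      simp only [Set.mem_Icc, P]
      constructor
      · exact le_refl _
      · nlinarith [hΨ0.le]
    have hP : P ∈ {p : Espace m n | (∀ j i, p.1 j i ∈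
        Icc ((a j i : ℝ) * Ψ) (((a j i : ℝ) + 1) * Ψ)) ∧
        ∀ i, p.2 i ∈ Icc (lo i) (lo i + Ψ)} := by
      refine ⟨hXmem, fun i => ?_⟩
      simp only [Set.mem_Icc, P]
      exact ⟨le_refl _, by linarith [hΨ0.le]⟩
    have hP' : P' ∈ {p : Espace m n | (∀ j i, p.1 j i ∈
        Icc ((a j i : ℝ) * Ψ) (((a j i : ℝ) + 1) * Ψ)) ∧
        ∀ i, p.2 i ∈ Icc (lo i) (lo i + Ψ)} := by
      refine ⟨hXmem, fun i => ?_⟩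
      by_cases hi : i = i0
      · subst hi
        simp only [P', Function.update_self, Set.mem_Icc]
        exact ⟨by linarith [hΨ0.le], le_refl _⟩
      · simp only [P', Function.update_of_ne hi, Set.mem_Icc]
        exact ⟨le_refl _, by linarith [hΨ0.le]⟩
    have hkey : ENNReal.ofReal Ψ = edist (P.2 i0) (P'.2 i0) := by
      simp only [P', Function.update_self]
      rw [edist_dist, Real.dist_eq]
      congr 1
      rw [abs_sub_comm]
      simp [P, abs_of_nonneg hΨ0.le]
    calc ENNReal.ofReal Ψ = edist (P.2 i0) (P'.2 i0) := hkey
      _ ≤ edist P.2 P'.2 := edist_le_pi_edist P.2 P'.2 i0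
      _ ≤ edist P P' := by rw [Prod.edist_eq]; exact le_max_right _ _
      _ ≤ EMetric.diam _ := EMetric.edist_le_diam_of_mem hP hP'

lemma sphere_card (hm : 1 ≤ m) (k : ℕ) (s : Finset (Fin m → ℤ))
    (hs : ∀ q ∈ s, qNorm q = k) : s.card ≤ 2 * m * (2*k+1)^(m-1) := by
  classical
  have hne : (Finset.univ : Finset (Fin m)).Nonempty := by
    rw [Finset.univ_nonempty_iff]
    exact Fin.pos_iff_nonempty.mp hm
  have hsub : s ⊆ Finset.univ.biUnion (fun j : Fin m =>
      Fintype.piFinset fun j' => if j' = j then ({(k:ℤ), -(k:ℤ)} : Finset ℤ)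
        else Finset.Icc (-(k:ℤ)) (k:ℤ)) := by
    intro q hq
    obtain ⟨j, -, hj⟩ := Finset.exists_mem_eq_sup Finset.univ hne (fun i => (q i).natAbs)
    rw [Finset.mem_biUnion]
    refine ⟨j, Finset.mem_univ _, ?_⟩
    rw [Fintype.mem_piFinset]
    intro j'
    by_cases h : j' = j
    · subst h
      rw [if_pos rfl]
      have h2 : (q j').natAbs = k := by
        rw [← hs q hq]
        unfold qNorm
        exact hj.symm
      simp only [Finset.mem_insert, Finset.mem_singleton]
      omega
    · rw [if_neg h, Finset.mem_Icc]
      have h3 := natAbs_le_qNorm m q j'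
      rw [hs q hq] at h3
      omega
  have hcardj : ∀ j : Fin m, (Fintype.piFinset fun j' =>
      if j' = j then ({(k:ℤ), -(k:ℤ)} : Finset ℤ)
        else Finset.Icc (-(k:ℤ)) (k:ℤ)).card ≤ 2 * (2*k+1)^(m-1) := by
    intro j
    rw [Fintype.card_piFinset]
    rw [← Finset.mul_prod_erase Finset.univ _ (Finset.mem_univ j)]
    have h1 : (if j = j then ({(k:ℤ), -(k:ℤ)} : Finset ℤ)
        else Finset.Icc (-(k:ℤ)) (k:ℤ)).card ≤ 2 := by
      rw [if_pos rfl]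
      exact (Finset.card_insert_le _ _).trans (by simp)
    have h2 : ∏ j' ∈ Finset.univ.erase j, (if j' = j then ({(k:ℤ), -(k:ℤ)} : Finset ℤ)
        else Finset.Icc (-(k:ℤ)) (k:ℤ)).card = (2*k+1)^(m-1) := by
      have : ∀ j' ∈ Finset.univ.erase j, (if j' = j then ({(k:ℤ), -(k:ℤ)} : Finset ℤ)
          else Finset.Icc (-(k:ℤ)) (k:ℤ)).card = 2*k+1 := by
        intro j' hj'
        rw [if_neg (Finset.ne_of_mem_erase hj'), Int.card_Icc]
        omega
      rw [Finset.prod_congr rfl this, Finset.prod_const,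
        Finset.card_erase_of_mem (Finset.mem_univ j), Finset.card_univ, Fintype.card_fin]
    calc _ ≤ 2 * ∏ j' ∈ Finset.univ.erase j, (if j' = j then ({(k:ℤ), -(k:ℤ)} : Finset ℤ)
          else Finset.Icc (-(k:ℤ)) (k:ℤ)).card := Nat.mul_le_mul_right _ h1
      _ = 2 * (2*k+1)^(m-1) := by rw [h2]
  calc s.card ≤ _ := Finset.card_le_card hsub
    _ ≤ ∑ j : Fin m, (Fintype.piFinset fun j' =>
        if j' = j then ({(k:ℤ), -(k:ℤ)} : Finset ℤ)
          else Finset.Icc (-(k:ℤ)) (k:ℤ)).card := Finset.card_biUnion_le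
    _ ≤ ∑ _j : Fin m, 2 * (2*k+1)^(m-1) := Finset.sum_le_sum fun j _ => hcardj j
    _ = 2 * m * (2*k+1)^(m-1) := by
        rw [Finset.sum_const, Finset.card_univ, Fintype.card_fin, smul_eq_mul]; ring

lemma card_Fa_le (R : ℕ) (q : Fin m → ℤ) (hq : 1 ≤ qNorm q)
    (hψ : ∀ r, 0 < ψ r) (hΨ1 : Psi ψ (qNorm q) ≤ 1) :
    ((Fa m n ψ R q).card : ℝ) ≤ (6 / Psi ψ (qNorm q))^(m*n) := by
  set Ψ := Psi ψ (qNorm q) with hΨdef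
  have hΨ0 : 0 < Ψ := Psi_pos ψ hψ hq
  have hceil : (1:ℝ)/(2*Ψ) ≤ ((⌈1/(2*Ψ)⌉ : ℤ) : ℝ) := Int.le_ceil _
  have hceil2 : ((⌈1/(2*Ψ)⌉ : ℤ) : ℝ) < 1/(2*Ψ) + 1 := Int.ceil_lt_add_one _
  have hsA0 : 0 ≤ 2 * sA ψ (qNorm q) + 1 := by
    have : (0:ℝ) < 1/(2*Ψ) := by positivity
    have h4 : (0:ℝ) < ((sA ψ (qNorm q) : ℤ) : ℝ) := by
      rw [sA, ← hΨdef]; push_cast; linarith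
    have : (0:ℤ) < sA ψ (qNorm q) := by exact_mod_cast h4
    omega
  have hcard1 : ((Finset.Icc (-(sA ψ (qNorm q))) (sA ψ (qNorm q))).card : ℝ) ≤ 6 / Ψ := by
    rw [Int.card_Icc]
    have h9 : ((sA ψ (qNorm q) + 1 - -(sA ψ (qNorm q))).toNat : ℤ)
        = 2 * sA ψ (qNorm q) + 1 := by
      rw [Int.toNat_of_nonneg (by omega)]; ring
    have heq : ((sA ψ (qNorm q) + 1 - -(sA ψ (qNorm q))).toNat : ℝ)
        = ((2 * sA ψ (qNorm q) + 1 : ℤ) : ℝ) := by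
      exact_mod_cast congrArg (Int.cast : ℤ → ℝ) h9
    rw [heq]
    have h5 : ((sA ψ (qNorm q) : ℤ) : ℝ) ≤ 1/(2*Ψ) + 2 := by
      rw [sA, ← hΨdef]; push_cast; linarith
    have h6 : (5:ℝ) ≤ 5 / Ψ := by
      rw [le_div_iff₀ hΨ0]; nlinarith
    push_cast
    have h7 : (1:ℝ)/Ψ + 5 ≤ 6/Ψ := by
      have : (1:ℝ)/Ψ + 5/Ψ = 6/Ψ := by ring
      linarith
    have h8 : 2 * (1/(2*Ψ)) = 1/Ψ := by ring
    nlinarith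
  have hpos : (0:ℝ) ≤ 6 / Ψ := by positivity
  have hcard : (Fa m n ψ R q).card ≤ ((Finset.Icc (-(sA ψ (qNorm q))) (sA ψ (qNorm q))).card)^(m*n) := by
    rw [Fa]
    split_ifs with h
    · rw [Fintype.card_piFinset]
      have : ∀ j : Fin m, (Fintype.piFinset fun _ : Fin n =>
          Finset.Icc (-(sA ψ (qNorm q))) (sA ψ (qNorm q))).card
          = (Finset.Icc (-(sA ψ (qNorm q))) (sA ψ (qNorm q))).card ^ n := by
        intro j
        rw [Fintype.card_piFinset, Finset.prod_const, Finset.card_univ, Fintype.card_fin]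
      rw [Finset.prod_congr rfl (fun j _ => this j), Finset.prod_const, Finset.card_univ,
        Fintype.card_fin, ← pow_mul, Nat.mul_comm n m]
    · simp
  calc ((Fa m n ψ R q).card : ℝ)
      ≤ (((Finset.Icc (-(sA ψ (qNorm q))) (sA ψ (qNorm q))).card : ℝ))^(m*n) := by
        exact_mod_cast hcard
    _ ≤ (6 / Ψ)^(m*n) := pow_le_pow_left₀ (by positivity) hcard1 _

lemma card_Fd_le : ((Fd m n).card : ℝ) ≤ (2*(m:ℝ)+5)^n := by
  rw [Fd, Fintype.card_piFinset]
  have h : ∀ _j : Fin n, ((Finset.Icc (-((m:ℤ)+2)) ((m:ℤ)+2)).card) = 2*m+5 := by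
    intro j
    rw [Int.card_Icc]
    omega
  rw [Finset.prod_congr rfl (fun j _ => h j), Finset.prod_const, Finset.card_univ,
    Fintype.card_fin]
  push_cast
  exact le_refl _

lemma card_Fu_le (q : Fin m → ℤ) (hq : 1 ≤ qNorm q) :
    ((Fu m n q).card : ℝ) ≤ ((2*(m:ℝ)+5) * (qNorm q : ℝ))^n := by
  rw [Fu, Fintype.card_piFinset]
  have h : ∀ _j : Fin n, ((Finset.Icc (-(sU m (qNorm q))) (sU m (qNorm q))).card)
      = 2*((m+2)*(qNorm q))+1 := by
    intro j
    have hM : sU m (qNorm q) = (((m+2) * qNorm q : ℕ) : ℤ) := by rw [sU]; push_cast; ring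
    rw [Int.card_Icc, hM]
    generalize (m+2) * qNorm q = c
    omega
  rw [Finset.prod_congr rfl (fun j _ => h j), Finset.prod_const, Finset.card_univ,
    Fintype.card_fin]
  have hb : ((2*((m+2)*(qNorm q))+1 : ℕ) : ℝ) ≤ (2*(m:ℝ)+5) * (qNorm q : ℝ) := by
    have : (1:ℝ) ≤ (qNorm q : ℝ) := by exact_mod_cast hq
    push_cast
    nlinarith
  calc ((((2*((m+2)*(qNorm q))+1 : ℕ))^n : ℕ) : ℝ) = ((2*((m+2)*(qNorm q))+1 : ℕ) : ℝ)^n := by push_cast; ring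
    _ ≤ ((2*(m:ℝ)+5) * (qNorm q : ℝ))^n := pow_le_pow_left₀ (by positivity) hb _

def C1 (m n : ℕ) : ℝ := 6^(m*n) * (2*(m:ℝ)+5)^n * (2*(m:ℝ)+5)^n

def C2 (m n : ℕ) : ℝ := (2*(m:ℝ)*3^(m-1)) * C1 m n

lemma C1_pos : 0 < C1 m n := by unfold C1; positivity

def Gfun (f : ℝ → ℝ) (R k : ℕ) : ℝ≥0∞ :=
  if R ≤ k then
    ENNReal.ofReal (C1 m n * ((Psi ψ k)^(-(m*n : ℕ) : ℤ) * (k:ℝ)^n * f (Psi ψ k)))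
  else 0

def Hfun (f : ℝ → ℝ) (R k : ℕ) : ℝ≥0∞ :=
  if R ≤ k then
    ENNReal.ofReal (C2 m n * ((Psi ψ k)^(-(m*n : ℕ) : ℤ) * (k:ℝ)^(m+n-1) * f (Psi ψ k)))
  else 0

lemma fiber_sum_le (hn : 1 ≤ n) (hψ : ∀ r, 0 < ψ r) (f : ℝ → ℝ)
    (hf0 : ∀ x, 0 < x → 0 ≤ f x)
    (R : ℕ) (hR : 1 ≤ R) (hψ1 : ∀ k, R ≤ k → ψ k ≤ 1) (q : Fin m → ℤ) :
    ∑' b : (↥(Fa m n ψ R q) × ↥(Fd m n) × ↥(Fu m n q)),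
        ENNReal.ofReal (f (EMetric.diam
          (Tset m n ψ q (b.1 : Fin m → Fin n → ℤ) b.2.1 b.2.2)).toReal)
      ≤ Gfun m n ψ f R (qNorm q) := by
  by_cases hvalid : q ≠ 0 ∧ R ≤ qNorm q
  · -- valid case
    set k := qNorm q with hkdef
    have hk1 : 1 ≤ k := le_trans hR hvalid.2
    have hΨ0 : 0 < Psi ψ k := Psi_pos ψ hψ hk1
    have hΨ1 : Psi ψ k ≤ 1 := le_trans (Psi_le_psi ψ hψ hk1) (hψ1 k hvalid.2)
    have hdiam : ∀ b : (↥(Fa m n ψ R q) × ↥(Fd m n) × ↥(Fu m n q)),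
        ENNReal.ofReal (f (EMetric.diam
          (Tset m n ψ q (b.1 : Fin m → Fin n → ℤ) b.2.1 b.2.2)).toReal)
        = ENNReal.ofReal (f (Psi ψ k)) := by
      intro b
      rw [diam_Tset m n ψ hn hψ q hk1, ENNReal.toReal_ofReal hΨ0.le]
    rw [tsum_congr hdiam, tsum_fintype, Finset.sum_const, Finset.card_univ, nsmul_eq_mul]
    have hcardeq : (Fintype.card (↥(Fa m n ψ R q) × ↥(Fd m n) × ↥(Fu m n q)) : ℝ≥0∞)
        = (((Fa m n ψ R q).card * ((Fd m n).card * (Fu m n q).card) : ℕ) : ℝ≥0∞) := by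
      rw [Fintype.card_prod, Fintype.card_prod, Fintype.card_coe, Fintype.card_coe,
        Fintype.card_coe]
    rw [hcardeq]
    rw [Gfun, if_pos hvalid.2]
    rw [← ENNReal.ofReal_natCast, ← ENNReal.ofReal_mul (by positivity)]
    apply ENNReal.ofReal_le_ofReal
    -- real inequality
    have hFa := card_Fa_le m n ψ R q hk1 hψ hΨ1
    have hFd := card_Fd_le m n
    have hFu := card_Fu_le m n q hk1
    have hzid : (6 / Psi ψ k)^(m*n) = 6^(m*n) * (Psi ψ k)^(-(m*n : ℕ) : ℤ) := by
      rw [div_pow, zpow_neg, zpow_natCast, div_eq_mul_inv]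
    have hN : (((Fa m n ψ R q).card * ((Fd m n).card * (Fu m n q).card) : ℕ) : ℝ)
        ≤ C1 m n * ((Psi ψ k)^(-(m*n : ℕ) : ℤ) * (k:ℝ)^n) := by
      push_cast
      have hz0 : (0:ℝ) ≤ (Psi ψ k)^(-(m*n : ℕ) : ℤ) := by positivity
      calc ((Fa m n ψ R q).card : ℝ) * (((Fd m n).card : ℝ) * ((Fu m n q).card : ℝ))
          ≤ (6 / Psi ψ k)^(m*n) * ((2*(m:ℝ)+5)^n * ((2*(m:ℝ)+5) * (k:ℝ))^n) := by
            apply mul_le_mul hFa _ (by positivity) (by positivity)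
            apply mul_le_mul hFd hFu (by positivity) (by positivity)
        _ = C1 m n * ((Psi ψ k)^(-(m*n : ℕ) : ℤ) * (k:ℝ)^n) := by
            rw [hzid, mul_pow]
            unfold C1
            ring
    have hfΨ : 0 ≤ f (Psi ψ k) := hf0 _ hΨ0
    calc (((Fa m n ψ R q).card * ((Fd m n).card * (Fu m n q).card) : ℕ) : ℝ) * f (Psi ψ k)
        ≤ (C1 m n * ((Psi ψ k)^(-(m*n : ℕ) : ℤ) * (k:ℝ)^n)) * f (Psi ψ k) :=
          mul_le_mul_of_nonneg_right hN hfΨ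
      _ = C1 m n * ((Psi ψ k)^(-(m*n : ℕ) : ℤ) * (k:ℝ)^n * f (Psi ψ k)) := by ring
  · -- invalid: empty fiber
    haveI : IsEmpty (↥(Fa m n ψ R q)) := by
      constructor
      rintro ⟨b, hb⟩
      rw [Fa, if_neg hvalid] at hb
      exact absurd hb (Finset.notMem_empty _)
    haveI : IsEmpty (↥(Fa m n ψ R q) × ↥(Fd m n) × ↥(Fu m n q)) := inferInstance
    rw [tsum_empty]
    exact zero_le

lemma total_sum_le (hm : 1 ≤ m) (hn : 1 ≤ n) (hψ : ∀ r, 0 < ψ r) (f : ℝ → ℝ)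
    (hf0 : ∀ x, 0 < x → 0 ≤ f x)
    (R : ℕ) (hR : 1 ≤ R) (hψ1 : ∀ k, R ≤ k → ψ k ≤ 1) :
    ∑' i : Idx m n ψ R, ENNReal.ofReal (f (EMetric.diam (tfun m n ψ R i)).toReal)
      ≤ ∑' k : ℕ, Hfun m n ψ f R k := by
  have h1 : ∑' i : Idx m n ψ R, ENNReal.ofReal (f (EMetric.diam (tfun m n ψ R i)).toReal)
      = ∑' q : Fin m → ℤ, ∑' b : (↥(Fa m n ψ R q) × ↥(Fd m n) × ↥(Fu m n q)),
        ENNReal.ofReal (f (EMetric.diam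
          (Tset m n ψ q (b.1 : Fin m → Fin n → ℤ) b.2.1 b.2.2)).toReal) := by
    exact ENNReal.tsum_sigma' _
  rw [h1]
  have h2 : ∑' q : Fin m → ℤ, ∑' b : (↥(Fa m n ψ R q) × ↥(Fd m n) × ↥(Fu m n q)),
        ENNReal.ofReal (f (EMetric.diam
          (Tset m n ψ q (b.1 : Fin m → Fin n → ℤ) b.2.1 b.2.2)).toReal)
      ≤ ∑' q : Fin m → ℤ, Gfun m n ψ f R (qNorm q) :=
    Summable.tsum_le_tsum (fun q => fiber_sum_le m n ψ hn hψ f hf0 R hR hψ1 q)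
      ENNReal.summable ENNReal.summable
  refine le_trans h2 ?_
  rw [← ENNReal.tsum_fiberwise (fun q : Fin m → ℤ => Gfun m n ψ f R (qNorm q)) qNorm]
  apply Summable.tsum_le_tsum _ ENNReal.summable ENNReal.summable
  intro k
  have hfin : ({q : Fin m → ℤ | qNorm q = k}).Finite := by
    apply (finite_qNorm_lt m (k+1)).subset
    intro q hq
    simp only [Set.mem_setOf_eq] at hq ⊢
    omega
  have hpre : (qNorm ⁻¹' {k} : Set (Fin m → ℤ)) = {q : Fin m → ℤ | qNorm q = k} := rfl
  haveI : Fintype (↥(qNorm ⁻¹' {k} : Set (Fin m → ℤ))) := (hpre ▸ hfin).fintype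
  have h3 : ∑' b : (qNorm ⁻¹' {k} : Set (Fin m → ℤ)), Gfun m n ψ f R (qNorm (b : Fin m → ℤ))
      = ∑' _b : (qNorm ⁻¹' {k} : Set (Fin m → ℤ)), Gfun m n ψ f R k := by
    apply tsum_congr
    rintro ⟨b, hb⟩
    simp only [Set.mem_preimage, Set.mem_singleton_iff] at hb
    rw [hb]
  rw [h3, tsum_fintype, Finset.sum_const, Finset.card_univ, nsmul_eq_mul]
  -- now bound (card) * Gfun k ≤ Hfun k
  by_cases hRk : R ≤ k
  · have hk1 : 1 ≤ k := le_trans hR hRk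
    have hΨ0 : 0 < Psi ψ k := Psi_pos ψ hψ hk1
    have hcard : Fintype.card (↥(qNorm ⁻¹' {k} : Set (Fin m → ℤ))) ≤ 2*m*(2*k+1)^(m-1) := by
      rw [← Set.toFinset_card]
      apply sphere_card m hm k
      intro q hq
      have := Set.mem_toFinset.mp hq
      exact this
    rw [Gfun, if_pos hRk, Hfun, if_pos hRk]
    rw [← ENNReal.ofReal_natCast, ← ENNReal.ofReal_mul (by positivity)]
    apply ENNReal.ofReal_le_ofReal
    have hk1R : (1:ℝ) ≤ (k:ℝ) := by exact_mod_cast hk1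
    have hcardR : ((Fintype.card (↥(qNorm ⁻¹' {k} : Set (Fin m → ℤ)))) : ℝ)
        ≤ 2*(m:ℝ)*3^(m-1) * (k:ℝ)^(m-1) := by
      have hc1 : ((Fintype.card (↥(qNorm ⁻¹' {k} : Set (Fin m → ℤ)))) : ℝ)
          ≤ ((2*m*(2*k+1)^(m-1) : ℕ) : ℝ) := by exact_mod_cast hcard
      refine le_trans hc1 ?_
      push_cast
      have hb : ((2*k+1 : ℝ))^(m-1) ≤ (3*(k:ℝ))^(m-1) := by
        apply pow_le_pow_left₀ (by positivity)
        linarith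
      calc 2*(m:ℝ)*(2*(k:ℝ)+1)^(m-1) ≤ 2*(m:ℝ)*(3*(k:ℝ))^(m-1) := by
            apply mul_le_mul_of_nonneg_left hb (by positivity)
        _ = 2*(m:ℝ)*3^(m-1) * (k:ℝ)^(m-1) := by rw [mul_pow]; ring
    have hz0 : (0:ℝ) ≤ (Psi ψ k)^(-(m*n : ℕ) : ℤ) := by positivity
    have hfΨ : 0 ≤ f (Psi ψ k) := hf0 _ hΨ0
    have hpowid : (k:ℝ)^(m-1) * (k:ℝ)^n = (k:ℝ)^(m+n-1) := by
      rw [← pow_add]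
      congr 1
      omega
    calc ((Fintype.card (↥(qNorm ⁻¹' {k} : Set (Fin m → ℤ)))) : ℝ)
          * (C1 m n * ((Psi ψ k)^(-(m*n : ℕ) : ℤ) * (k:ℝ)^n * f (Psi ψ k)))
        ≤ (2*(m:ℝ)*3^(m-1) * (k:ℝ)^(m-1))
          * (C1 m n * ((Psi ψ k)^(-(m*n : ℕ) : ℤ) * (k:ℝ)^n * f (Psi ψ k))) := by
          apply mul_le_mul_of_nonneg_right hcardR
          have := C1_pos m n
          positivity
      _ = C2 m n * ((Psi ψ k)^(-(m*n : ℕ) : ℤ) * ((k:ℝ)^(m-1) * (k:ℝ)^n) * f (Psi ψ k)) := by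
          unfold C2; ring
      _ = C2 m n * ((Psi ψ k)^(-(m*n : ℕ) : ℤ) * (k:ℝ)^(m+n-1) * f (Psi ψ k)) := by
          rw [hpowid]
  · rw [Gfun, if_neg hRk, Hfun, if_neg hRk, mul_zero]

lemma C2_nonneg : 0 ≤ C2 m n := by unfold C2 C1; positivity

def G0 (f : ℝ → ℝ) (r : ℕ) : ℝ≥0∞ :=
  ENNReal.ofReal (f (ψ (r + 1) / ((r:ℝ) + 1)) *
    (ψ (r + 1) / ((r:ℝ) + 1)) ^ (-((m * n : ℕ) : ℤ)) * ((r : ℝ) + 1) ^ (m + n - 1))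

lemma Hfun_eq (f : ℝ → ℝ) {R k : ℕ} (hR : 1 ≤ R) (hRk : R ≤ k) :
    Hfun m n ψ f R k = ENNReal.ofReal (C2 m n) * G0 m n ψ f (k - 1) := by
  have hk1 : 1 ≤ k := le_trans hR hRk
  have h1 : (k - 1) + 1 = k := by omega
  have h2 : ((k - 1 : ℕ) : ℝ) + 1 = (k : ℝ) := by
    rw [Nat.cast_sub hk1]; ring
  rw [Hfun, if_pos hRk, G0, h1, h2, ← ENNReal.ofReal_mul (C2_nonneg m n)]
  congr 1
  unfold Psi
  ring

lemma tail_bound (f : ℝ → ℝ) (R : ℕ) (hR : 1 ≤ R) :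
    ∑' k : ℕ, Hfun m n ψ f R k
      = ENNReal.ofReal (C2 m n) * ∑' j : ℕ, G0 m n ψ f (j + (R - 1)) := by
  have hinj : Function.Injective (fun j : ℕ => j + R) := add_left_injective R
  have hsupp : Function.support (fun k => Hfun m n ψ f R k)
      ⊆ Set.range (fun j : ℕ => j + R) := by
    intro k hk
    by_cases h : R ≤ k
    · exact ⟨k - R, by simp; omega⟩
    · exfalso; apply hk; show Hfun m n ψ f R k = 0; rw [Hfun, if_neg h]
  rw [← Function.Injective.tsum_eq hinj hsupp]
  have heq : ∀ j : ℕ, Hfun m n ψ f R ((fun j : ℕ => j + R) j)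
      = ENNReal.ofReal (C2 m n) * G0 m n ψ f (j + (R - 1)) := by
    intro j
    have h3 : (j + R) - 1 = j + (R - 1) := by omega
    rw [Hfun_eq m n ψ f hR (Nat.le_add_left R j), h3]
  rw [tsum_congr heq, ENNReal.tsum_mul_left]

end Stmt13Aux

/-- Theorem 2.4, convergence part: let `ψ` be an
approximating function (no monotonicity assumed), `f` and `r ↦ r^{-mn} f(r)`
dimension functions with `r ↦ r^{-(m+1)n} f(r)` monotonic. If
`∑_{r≥1} f(Ψ(r)) Ψ(r)^{-mn} r^{m+n-1} < ∞` (where `Ψ(r) = ψ(r)/r`), then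
`H^f(W_α(m,n;ψ)) = 0`. -/
theorem stmt13 (m n : ℕ) (hm : 1 ≤ m) (hn : 1 ≤ n)
    (ψ : ℕ → ℝ) (hψ : IsApprox ψ) (f : ℝ → ℝ) (hf : IsDimFun f)
    (hf2 : IsDimFun fun r : ℝ => r ^ (-((m * n : ℕ) : ℤ)) * f r)
    (hmono : MonoOn fun r : ℝ => r ^ (-(((m + 1) * n : ℕ) : ℤ)) * f r)
    (hconv : Summable fun r : ℕ =>
      f (ψ (r + 1) / (r + 1)) * (ψ (r + 1) / (r + 1)) ^ (-((m * n : ℕ) : ℤ)) *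
        ((r : ℝ) + 1) ^ (m + n - 1)) :
    hGauge f (Wclassical m n ψ) = 0 := by
  obtain ⟨hψpos, hψ0⟩ := hψ
  have hev1 : ∀ᶠ k in atTop, ψ k ≤ 1 := by
    filter_upwards [hψ0.eventually (gt_mem_nhds one_pos)] with k hk
    exact hk.le
  obtain ⟨R₀, hR₀⟩ := eventually_atTop.mp hev1
  set mfun : ℝ≥0∞ → ℝ≥0∞ := fun r => ENNReal.ofReal (f r.toReal) with hmfun
  set rfun : ℕ → ℝ≥0∞ := fun R => ⨆ k, ⨆ (_ : R ≤ k), ENNReal.ofReal (ψ k) with hrfun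
  have hofreal : Tendsto (fun k => ENNReal.ofReal (ψ k)) atTop (nhds 0) := by
    have h := ENNReal.tendsto_ofReal hψ0
    simpa using h
  have hrtend : Tendsto rfun atTop (nhds 0) := by
    have hant : Antitone rfun := by
      intro R R' h
      exact iSup₂_le fun k hk =>
        le_iSup₂ (f := fun k (_ : R ≤ k) => ENNReal.ofReal (ψ k)) k (le_trans h hk)
    have h0 : (⨅ R, rfun R) = 0 := by
      rw [hrfun, ← limsup_eq_iInf_iSup_of_nat]
      exact hofreal.limsup_eq
    have h1 := tendsto_atTop_iInf hant
    rwa [h0] at h1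
  have ht : ∀ᶠ R in atTop, ∀ i : Stmt13Aux.Idx m n ψ R,
      EMetric.diam (Stmt13Aux.tfun m n ψ R i) ≤ rfun R := by
    filter_upwards [eventually_ge_atTop 1] with R hR1
    rintro ⟨q, a, d, u⟩
    have hvalid : q ≠ 0 ∧ R ≤ qNorm q := by
      by_contra h
      have h2 := a.2
      simp only [Stmt13Aux.Fa, if_neg h] at h2
      exact absurd h2 (Finset.notMem_empty _)
    have hk1 : 1 ≤ qNorm q := le_trans hR1 hvalid.2
    have hdiam : EMetric.diam (Stmt13Aux.tfun m n ψ R ⟨q, a, d, u⟩)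
        = ENNReal.ofReal (Stmt13Aux.Psi ψ (qNorm q)) :=
      Stmt13Aux.diam_Tset m n ψ hn hψpos q hk1 _ _ _
    rw [hdiam]
    calc ENNReal.ofReal (Stmt13Aux.Psi ψ (qNorm q))
        ≤ ENNReal.ofReal (ψ (qNorm q)) :=
          ENNReal.ofReal_le_ofReal (Stmt13Aux.Psi_le_psi ψ hψpos hk1)
      _ ≤ rfun R :=
          le_iSup₂ (f := fun k (_ : R ≤ k) => ENNReal.ofReal (ψ k)) (qNorm q) hvalid.2
  have hst : ∀ᶠ R in atTop, Wclassical m n ψ ⊆ ⋃ i, Stmt13Aux.tfun m n ψ R i := by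
    filter_upwards [eventually_ge_atTop 1, eventually_ge_atTop R₀] with R h1 h2
    exact Stmt13Aux.cover m n ψ hm hψpos R h1 (fun k hk => hR₀ k (le_trans h2 hk))
  have hle := Measure.mkMetric_le_liminf_tsum (Wclassical m n ψ) rfun hrtend
      (Stmt13Aux.tfun m n ψ) ht hst mfun
  have hg0 : ∀ r : ℕ, 0 ≤ f (ψ (r + 1) / (↑r + 1)) *
      (ψ (r + 1) / (↑r + 1)) ^ (-((m * n : ℕ) : ℤ)) * ((r : ℝ) + 1) ^ (m + n - 1) := by
    intro r
    have hpos : 0 < ψ (r + 1) / ((r:ℝ) + 1) := by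
      have := hψpos (r+1)
      positivity
    have hf1 := (hf.2.2.1 _ hpos).le
    positivity
  have hne : (∑' r : ℕ, Stmt13Aux.G0 m n ψ f r) ≠ ⊤ := by
    simp only [Stmt13Aux.G0]
    rw [← ENNReal.ofReal_tsum_of_nonneg hg0 hconv]
    exact ENNReal.ofReal_ne_top
  have htail : Tendsto (fun R' : ℕ => ∑' j : ℕ, Stmt13Aux.G0 m n ψ f (j + R'))
      atTop (nhds 0) := ENNReal.tendsto_sum_nat_add _ hne
  set B : ℕ → ℝ≥0∞ := fun R => ENNReal.ofReal (Stmt13Aux.C2 m n) *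
      ∑' j : ℕ, Stmt13Aux.G0 m n ψ f (j + (R - 1)) with hBdef
  have hBtend : Tendsto B atTop (nhds 0) := by
    have hs : Tendsto (fun R : ℕ => ∑' j : ℕ, Stmt13Aux.G0 m n ψ f (j + (R - 1)))
        atTop (nhds 0) := htail.comp (tendsto_sub_atTop_nat 1)
    have h2 := ENNReal.Tendsto.const_mul (a := ENNReal.ofReal (Stmt13Aux.C2 m n)) hs
      (Or.inr ENNReal.ofReal_ne_top)
    simpa using h2
  have hev : ∀ᶠ R in atTop,
      ∑' i, mfun (EMetric.diam (Stmt13Aux.tfun m n ψ R i)) ≤ B R := by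
    filter_upwards [eventually_ge_atTop 1, eventually_ge_atTop R₀] with R h1 h2
    have hfle : ∀ x, 0 < x → 0 ≤ f x := fun x hx => (hf.2.2.1 x hx).le
    calc ∑' i, mfun (EMetric.diam (Stmt13Aux.tfun m n ψ R i))
        ≤ ∑' k : ℕ, Stmt13Aux.Hfun m n ψ f R k :=
          Stmt13Aux.total_sum_le m n ψ hm hn hψpos f hfle R h1
            (fun k hk => hR₀ k (le_trans h2 hk))
      _ = B R := Stmt13Aux.tail_bound m n ψ f R h1
  have hliminf : liminf
      (fun R => ∑' i, mfun (EMetric.diam (Stmt13Aux.tfun m n ψ R i))) atTop ≤ 0 := by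
    calc liminf (fun R => ∑' i, mfun (EMetric.diam (Stmt13Aux.tfun m n ψ R i))) atTop
        ≤ liminf B atTop := liminf_le_liminf hev
      _ = 0 := hBtend.liminf_eq
  have hfinal : hGauge f (Wclassical m n ψ) ≤ 0 := le_trans hle hliminf
  exact le_antisymm hfinal zero_le
end
end
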